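/- Let (T⊛, T⊚) be a latin bitrade with bijections β₁, β₂, β₃ : T⊚ → T⊛ and permutations τ₁ = β₂⁻¹β₃, τ₂ = β₃⁻¹β₁, τ₃ = β₁⁻¹β₂ of T⊛ (composition left to right). Then τ₁τ₂τ₃ = 1 and each τ_i is fixed-point-free on T⊛ (i.e., conditions (T1) and (T3) hold). -/
import Mathlib


/-- `Agree2 r a b` says that the triples `a` and `b` agree in the two
coordinates other than `r` (coordinates indexed by `Fin 3`). -/
def Agree2 {A₁ A₂ A₃ : Type*} (r : Fin 3) (a b : A₁ × A₂ × A₃) : Prop :=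
  if r = 0 then a.2.1 = b.2.1 ∧ a.2.2 = b.2.2
  else if r = 1 then a.1 = b.1 ∧ a.2.2 = b.2.2
  else a.1 = b.1 ∧ a.2.1 = b.2.1

/-- `CoordNe r a b` says that the triples `a` and `b` differ in coordinate `r`. -/
def CoordNe {A₁ A₂ A₃ : Type*} (r : Fin 3) (a b : A₁ × A₂ × A₃) : Prop :=
  if r = 0 then a.1 ≠ b.1
  else if r = 1 then a.2.1 ≠ b.2.1
  else a.2.2 ≠ b.2.2

/-- A partial latin square: any two triples agreeing in two coordinates are equal. -/
def IsPLS {A₁ A₂ A₃ : Type*} (T : Set (A₁ × A₂ × A₃)) : Prop :=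
  ∀ a ∈ T, ∀ b ∈ T, ∀ r : Fin 3, Agree2 r a b → a = b

/-- A latin bitrade `(T₁, T₂)`: two disjoint partial latin squares such that each triple
of one is matched, for each pair of coordinates, by a unique triple of the other
agreeing in those two coordinates. -/
structure IsBitrade {A₁ A₂ A₃ : Type*} (T₁ T₂ : Set (A₁ × A₂ × A₃)) : Prop where
  pls₁ : IsPLS T₁
  pls₂ : IsPLS T₂
  disj : T₁ ∩ T₂ = ∅
  r2 : ∀ a ∈ T₁, ∀ r : Fin 3, ∃! b, b ∈ T₂ ∧ Agree2 r a b
  r3 : ∀ a ∈ T₂, ∀ r : Fin 3, ∃! b, b ∈ T₁ ∧ Agree2 r a b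


lemma agree2_two {A₁ A₂ A₃ : Type*} {r s : Fin 3} (hrs : r ≠ s)
    {a b : A₁ × A₂ × A₃} (h1 : Agree2 r a b) (h2 : Agree2 s a b) : a = b := by
  fin_cases r <;> fin_cases s <;> simp_all [Agree2, Prod.ext_iff]

/-- Given a latin bitrade with its bijections `β₁, β₂, β₃ : T⊚ → T⊛`
(where `β r` agrees with the identity in both coordinates other than `r`), the
permutations `τ₁ = β₂⁻¹β₃`, `τ₂ = β₃⁻¹β₁`, `τ₃ = β₁⁻¹β₂` of `T⊛` (composed left to
right, i.e. via `Equiv.trans`) satisfy (T1) `τ₁τ₂τ₃ = 1` and (T3) each `τ_i` is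
fixed-point-free. -/
theorem tau_T1_T3 {A₁ A₂ A₃ : Type*} [Finite A₁] [Finite A₂] [Finite A₃]
    {T₁ T₂ : Set (A₁ × A₂ × A₃)} (h : IsBitrade T₁ T₂)
    (β : Fin 3 → (T₂ ≃ T₁))
    (hβ : ∀ r : Fin 3, ∀ a : T₂, Agree2 r a.val ((β r) a).val) :
    let τ₁ := (β 1).symm.trans (β 2)
    let τ₂ := (β 2).symm.trans (β 0)
    let τ₃ := (β 0).symm.trans (β 1)
    ((τ₁.trans τ₂).trans τ₃ = Equiv.refl T₁) ∧
    (∀ x : T₁, τ₁ x ≠ x) ∧ (∀ x : T₁, τ₂ x ≠ x) ∧ (∀ x : T₁, τ₃ x ≠ x) := by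
  intro τ₁ τ₂ τ₃
  have key : ∀ r s : Fin 3, r ≠ s → ∀ x : T₁, (β s) ((β r).symm x) ≠ x := by
    intro r s hrs x hx
    set a := (β r).symm x with ha
    have h1 : Agree2 r a.val x.val := by
      simpa [ha, Equiv.apply_symm_apply] using hβ r ((β r).symm x)
    have h2 : Agree2 s a.val x.val := by
      have := hβ s a; rwa [show (β s) a = x from hx] at this
    have : a.val = x.val := agree2_two hrs h1 h2
    have hmem : x.val ∈ T₁ ∩ T₂ := ⟨x.2, this ▸ a.2⟩
    rw [h.disj] at hmem
    exact hmem
  refine ⟨?_, key 1 2 (by decide), key 2 0 (by decide), key 0 1 (by decide)⟩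
  refine Equiv.ext fun x => ?_
  simp [τ₁, τ₂, τ₃, Equiv.symm_apply_apply]
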